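/- The semigroup I^cf_λ is simple, i.e., for all α, β in I^cf_λ there exist γ, δ in I^cf_λ such that γ·α·δ = β; equivalently, I^cf_λ has no proper two-sided ideals. -/

import Mathlib

open Function Set

namespace IcfPaper

variable {ι : Type*}

lemma trans_none_finite {f g : ι ≃. ι}
    (hf : {a | f a = none}.Finite) (hg : {b | g b = none}.Finite) :
    {a | (f.trans g) a = none}.Finite := by
  have hsub : {a | (f.trans g) a = none} ⊆
      {a | f a = none} ∪ ⋃ b ∈ {b | g b = none}, {a | f.symm b = some a} := by
    intro a ha
    simp only [Set.mem_setOf_eq] at ha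
    rcases hfa : f a with _ | b
    · exact Or.inl hfa
    · have hg' : g b = none := by
        have : (f.trans g) a = (f a).bind g := rfl
        rw [this, hfa] at ha
        exact ha
      refine Or.inr ?_
      refine Set.mem_biUnion hg' ?_
      exact (PEquiv.eq_some_iff f).2 hfa
  refine Set.Finite.subset (hf.union (hg.biUnion ?_)) hsub
  intro b _
  apply Set.Subsingleton.finite
  intro a1 h1 a2 h2
  simp only [Set.mem_setOf_eq] at h1 h2
  rw [h1] at h2
  exact Option.some_injective _ h2

/-- The monoid of injective partial selfmaps of `ι` with cofinite domain and range. -/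
def Icf (ι : Type*) : Type _ :=
  {f : ι ≃. ι // {a | f a = none}.Finite ∧ {b | f.symm b = none}.Finite}

namespace Icf

instance : Monoid (Icf ι) where
  mul f g := ⟨f.1.trans g.1, trans_none_finite f.2.1 g.2.1, by
      rw [PEquiv.symm_trans_rev]
      exact trans_none_finite g.2.2 f.2.2⟩
  one := ⟨PEquiv.refl ι, by
      constructor <;>
      · convert Set.finite_empty
        ext a
        simp only [Set.mem_setOf_eq, Set.mem_empty_iff_false, iff_false]
        intro h
        first | exact Option.some_ne_none a h | simp at h⟩
  mul_assoc a b c := Subtype.ext (PEquiv.trans_assoc _ _ _)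
  one_mul a := Subtype.ext (PEquiv.refl_trans _)
  mul_one a := Subtype.ext (PEquiv.trans_refl _)

/-- The domain of an element of `Icf ι`. -/
def dom (f : Icf ι) : Set ι := {a | (f.1 a).isSome}

/-- The range of an element of `Icf ι`. -/
def ran (f : Icf ι) : Set ι := {b | (f.1.symm b).isSome}

/-- `d̄ f`, the number of points of `ι` outside of the domain of `f`. -/
noncomputable def dbar (f : Icf ι) : ℕ := (dom f)ᶜ.ncard

/-- `r̄ f`, the number of points of `ι` outside of the range of `f`. -/
noncomputable def rbar (f : Icf ι) : ℕ := (ran f)ᶜ.ncard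

end Icf

/-- The bicyclic semigroup `⟨p, q | pq = 1⟩`, realized as `ℕ × ℕ` with the operation
`(a,b)(c,d) = (a - b + max(b,c), d - c + max(b,c))`. -/
def Bicyclic : Type := ℕ × ℕ

instance : Mul Bicyclic :=
  ⟨fun x y => (x.1 - x.2 + max x.2 y.1, y.2 - y.1 + max x.2 y.1)⟩


lemma total_trans_symm {ι : Type*} (f : ι ≃. ι) (h : ∀ a, (f a).isSome) :
    f.trans f.symm = PEquiv.refl ι := by
  apply PEquiv.ext
  intro a
  obtain ⟨c, hc⟩ := Option.isSome_iff_exists.1 (h a)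
  show (f a).bind f.symm = some a
  rw [hc, Option.bind_some]
  exact (PEquiv.eq_some_iff f).2 hc

/-- The semigroup `Icf ι` is simple: for all `α β` there are `γ δ` with `γ·α·δ = β`. -/
theorem statement0 {ι : Type*} [Infinite ι] (α β : Icf ι) :
    ∃ γ δ : Icf ι, γ * α * δ = β := by
  classical
  have hdc : ((Icf.dom α)ᶜ).Finite := by
    have h : (Icf.dom α)ᶜ = {a | α.1 a = none} := by
      ext a
      simp [Icf.dom, Option.not_isSome_iff_eq_none]
    rw [h]; exact α.2.1
  have hinf : (Icf.dom α).Infinite := by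
    have h := hdc.infinite_compl
    rwa [compl_compl] at h
  -- an equivalence `ι ≃ dom α`
  have hcard : Cardinal.mk ↥(Icf.dom α) = Cardinal.mk ι := by
    have hsum := Cardinal.mk_sum_compl (Icf.dom α)
    have hlt : Cardinal.mk ↥((Icf.dom α)ᶜ) ≤ Cardinal.mk ↥(Icf.dom α) := by
      refine le_trans (le_of_lt hdc.lt_aleph0) ?_
      exact Cardinal.infinite_iff.1 hinf.to_subtype
    have h0 : Cardinal.aleph0 ≤ Cardinal.mk ↥(Icf.dom α) :=
      Cardinal.infinite_iff.1 hinf.to_subtype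
    rw [Cardinal.add_eq_left h0 hlt] at hsum
    exact hsum
  obtain ⟨e'⟩ := Cardinal.eq.1 hcard
  set e : ι ≃ ↥(Icf.dom α) := e'.symm with he
  -- γ : the partial map given by `e`
  set γpe : ι ≃. ι :=
    { toFun := fun a => some ((e a : ι))
      invFun := fun b => if h : b ∈ Icf.dom α then some (e.symm ⟨b, h⟩) else none
      inv := by
        intro a b
        constructor
        · intro h
          split_ifs at h with hb
          · obtain rfl : e.symm ⟨b, hb⟩ = a := Option.some_injective _ h
            simp
        · intro h
          obtain rfl : (e a : ι) = b := Option.some_injective _ h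
          rw [dif_pos (e a).2]
          congr
          simp } with hγpe
  have hγ1 : {a | γpe a = none}.Finite := by
    convert Set.finite_empty
    ext a
    simp [hγpe]
  have hγsymm : ∀ b, γpe.symm b =
      if h : b ∈ Icf.dom α then some (e.symm ⟨b, h⟩) else none := fun b => rfl
  have hγ2 : {b | γpe.symm b = none}.Finite := by
    refine hdc.subset ?_
    intro b hb
    simp only [Set.mem_setOf_eq, hγsymm] at hb
    intro hmem
    rw [dif_pos hmem] at hb
    exact Option.some_ne_none _ hb
  set φ : ι ≃. ι := γpe.trans α.1 with hφdef
  have hφval : ∀ a, φ a = α.1 (e a) := fun a => rfl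
  have hφ : ∀ a, (φ a).isSome := by
    intro a
    rw [hφval]
    exact (e a).2
  set δpe : ι ≃. ι := φ.symm.trans β.1 with hδdef
  have hφsymm_fin : {b | φ.symm b = none}.Finite := by
    rw [hφdef, PEquiv.symm_trans_rev]
    exact trans_none_finite α.2.2 hγ2
  have hφ_none : {a | φ a = none}.Finite := by
    convert Set.finite_empty
    ext a
    simp only [Set.mem_setOf_eq, Set.mem_empty_iff_false, iff_false]
    intro h
    have h2 := hφ a
    rw [h] at h2
    simp at h2
  have hδ1 : {a | δpe a = none}.Finite := trans_none_finite hφsymm_fin β.2.1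
  have hδ2 : {b | δpe.symm b = none}.Finite := by
    rw [hδdef, PEquiv.symm_trans_rev, PEquiv.symm_symm]
    exact trans_none_finite β.2.2 hφ_none
  refine ⟨⟨γpe, hγ1, hγ2⟩, ⟨δpe, hδ1, hδ2⟩, ?_⟩
  apply Subtype.ext
  show (γpe.trans α.1).trans δpe = β.1
  rw [← hφdef, hδdef, ← PEquiv.trans_assoc, total_trans_symm φ hφ, PEquiv.refl_trans]

end IcfPaper
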